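/- arXiv:1511.05091 — 2 statements merged into one kernel-verified Lean document; each statement's English description precedes it below -/
import Mathlib

section
/- Let ζ_j be a real zero of Ai. Then Im(A₋'(ζ_j)/A₋(ζ_j)) = −1/(8π²·|A₋(ζ_j)|³·|Ai'(ζ_j)|). -/
open Complex Topology Filter

/-- Wronskian of two solutions of the Airy ODE is constant. -/
lemma airy_wronskian_const (f g f' g' f'' g'' : ℂ → ℂ)
    (hf : ∀ z, HasDerivAt f (f' z) z) (hf' : ∀ z, HasDerivAt f' (f'' z) z)
    (hg : ∀ z, HasDerivAt g (g' z) z) (hg' : ∀ z, HasDerivAt g' (g'' z) z)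
    (hfo : ∀ z, f'' z = z * f z) (hgo : ∀ z, g'' z = z * g z) (x y : ℂ) :
    f x * g' x - f' x * g x = f y * g' y - f' y * g y := by
  apply is_const_of_deriv_eq_zero (𝕜 := ℂ) (f := fun z => f z * g' z - f' z * g z)
  · intro z
    exact (((hf z).mul (hg' z)).sub ((hf' z).mul (hg z))).differentiableAt
  · intro z
    rw [show (fun z => f z * g' z - f' z * g z) = f * g' - f' * g from rfl,
      (((hf z).mul (hg' z)).sub ((hf' z).mul (hg z))).deriv, hfo, hgo]
    ring

/-- anti-holomorphic conjugation of derivative -/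
lemma airy_deriv_conj_conj (f : ℂ → ℂ) (hf : Differentiable ℂ f)
    (hc : ∀ z, f (starRingEnd ℂ z) = starRingEnd ℂ (f z)) (z : ℂ) :
    deriv f (starRingEnd ℂ z) = starRingEnd ℂ (deriv f z) := by
  have hs : HasDerivAt f (starRingEnd ℂ (deriv f z)) (starRingEnd ℂ z) := by
    rw [hasDerivAt_iff_tendsto_slope]
    have hmap : Filter.map (starRingEnd ℂ) (𝓝[≠] z) = 𝓝[≠] (starRingEnd ℂ z) := by
      exact Complex.conjCLE.toHomeomorph.map_punctured_nhds_eq z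
    rw [← hmap, Filter.tendsto_map'_iff]
    have heq : (slope f (starRingEnd ℂ z)) ∘ (starRingEnd ℂ)
        = (starRingEnd ℂ) ∘ slope f z := by
      funext w
      simp only [Function.comp_apply, slope_def_field, hc]
      rw [← map_sub, ← map_sub, ← map_div₀]
    rw [heq]
    exact (Complex.continuous_conj.tendsto _).comp
      (hasDerivAt_iff_tendsto_slope.mp (hf z).hasDerivAt)
  exact hs.deriv

set_option maxHeartbeats 1000000 in
/-- If `ζ` is a real zero of the Airy function `Ai`, then
`Im(A₋'(ζ)/A₋(ζ)) = −1/(8π²·|A₋(ζ)|³·|Ai'(ζ)|)`, where `A₋(z) = Ai(e^{2πi/3}z)`.  Here `Ai`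
is the entire Airy function, real on the reals, satisfying `Ai'' = z·Ai` with the standard
values at `0`. -/
theorem airy_Aminus_log_deriv_at_zero
    (Ai : ℂ → ℂ)
    (hD : Differentiable ℂ Ai)
    (hode : ∀ z : ℂ, deriv (deriv Ai) z = z * Ai z)
    (hconj : ∀ z : ℂ, Ai (starRingEnd ℂ z) = starRingEnd ℂ (Ai z))
    (hAi0 : Ai 0 = ((1 / ((3:ℝ) ^ ((2:ℝ)/3) * Real.Gamma (2/3)) : ℝ) : ℂ))
    (hAi'0 : deriv Ai 0 = ((-(1 / ((3:ℝ) ^ ((1:ℝ)/3) * Real.Gamma (1/3))) : ℝ) : ℂ))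
    (ζ : ℝ) (hζ : Ai (ζ : ℂ) = 0) :
    ((deriv (fun w => Ai (Complex.exp (2 * (Real.pi : ℂ) * I / 3) * w)) (ζ : ℂ))
        / Ai (Complex.exp (2 * (Real.pi : ℂ) * I / 3) * ζ)).im
      = -1 / (8 * Real.pi ^ 2
          * ‖Ai (Complex.exp (2 * (Real.pi : ℂ) * I / 3) * ζ)‖ ^ 3
          * ‖deriv Ai (ζ : ℂ)‖) := by
  set ω : ℂ := Complex.exp (2 * (Real.pi : ℂ) * I / 3) with hωdef
  set s : ℝ := Real.sqrt 3 with hsdef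
  have hs2 : s ^ 2 = 3 := Real.sq_sqrt (by norm_num)
  have hspos : 0 < s := Real.sqrt_pos.mpr (by norm_num)
  have hπpos : 0 < Real.pi := Real.pi_pos
  -- explicit form of ω
  have hωe : ω = (-1 + (s:ℂ) * I) / 2 := by
    rw [hωdef, show (2 * (Real.pi : ℂ) * I / 3) = ((2 * Real.pi / 3 : ℝ) : ℂ) * I by
      push_cast; ring, Complex.exp_mul_I, ← Complex.ofReal_cos, ← Complex.ofReal_sin,
      show (2 * Real.pi / 3 : ℝ) = Real.pi - Real.pi / 3 by ring,
      Real.cos_pi_sub, Real.sin_pi_sub, Real.cos_pi_div_three, Real.sin_pi_div_three]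
    push_cast
    ring
  have hsC : ((s:ℂ)) ^ 2 = 3 := by exact_mod_cast hs2
  have hω3 : ω ^ 3 = 1 := by
    rw [hωdef, show Complex.exp (2 * (Real.pi : ℂ) * I / 3) ^ 3
      = Complex.exp (((3:ℕ):ℂ) * (2 * (Real.pi : ℂ) * I / 3)) from
        (Complex.exp_nat_mul _ 3).symm,
      show ((3:ℕ):ℂ) * (2 * (Real.pi : ℂ) * I / 3) = 2 * (Real.pi:ℂ) * I by push_cast; ring,
      Complex.exp_two_pi_mul_I]
  have hωne1 : ω ≠ 1 := by
    rw [hωe]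
    intro h
    have := congrArg Complex.re h
    simp [Complex.add_re, Complex.div_re] at this
    norm_num at this
  have hsum : 1 + ω + ω ^ 2 = 0 := by
    have h := hω3
    have : (ω - 1) * (1 + ω + ω ^ 2) = 0 := by linear_combination h
    rcases mul_eq_zero.mp this with h1 | h2
    · exact absurd (sub_eq_zero.mp h1) hωne1
    · exact h2
  -- derivative plumbing
  have hD' : Differentiable ℂ (deriv Ai) := by
    have h1 : AnalyticOnNhd ℂ Ai Set.univ :=
      hD.differentiableOn.analyticOnNhd isOpen_univ
    have h2 := h1.deriv
    intro z
    exact (h2 z (Set.mem_univ z)).differentiableAt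
  have hAi : ∀ z, HasDerivAt Ai (deriv Ai z) z := fun z => (hD z).hasDerivAt
  have hAi' : ∀ z, HasDerivAt (deriv Ai) (z * Ai z) z := fun z => hode z ▸ (hD' z).hasDerivAt
  have hcomp : ∀ (c z : ℂ), HasDerivAt (fun w => Ai (c * w)) (c * deriv Ai (c * z)) z := by
    intro c z
    have := (hAi (c * z)).comp z ((hasDerivAt_id z).const_mul c)
    exact this.congr_deriv (by ring)
  have hcomp' : ∀ (c z : ℂ),
      HasDerivAt (fun w => c * deriv Ai (c * w)) (c ^ 2 * ((c * z) * Ai (c * z))) z := by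
    intro c z
    have := (((hAi' (c * z)).comp z ((hasDerivAt_id z).const_mul c))).const_mul c
    refine this.congr_deriv ?_
    ring
  have hI2 : (I:ℂ)^2 = -1 := Complex.I_sq
  set a : ℂ := deriv Ai (ζ:ℂ) with hadef
  set B : ℂ := Ai (ω * (ζ:ℂ)) with hBdef
  set c : ℂ := deriv Ai (ω * (ζ:ℂ)) with hcdef
  have hAm'' : ∀ z, HasDerivAt (fun w => ω * deriv Ai (ω * w)) (z * Ai (ω * z)) z := by
    intro z
    convert hcomp' ω z using 1
    linear_combination (-(z * Ai (ω * z))) * hω3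
  have W1 := airy_wronskian_const Ai (fun z => Ai (ω * z)) (deriv Ai)
      (fun z => ω * deriv Ai (ω * z)) (fun z => z * Ai z) (fun z => z * Ai (ω * z))
      hAi hAi' (fun z => hcomp ω z) hAm'' (fun z => rfl) (fun z => rfl) (ζ:ℂ) 0
  simp only [mul_zero, hζ, zero_mul, zero_sub] at W1
  -- value of Ai 0 * Ai' 0
  have hK : Ai 0 * deriv Ai 0 = ((-(s/(6*Real.pi)) : ℝ) : ℂ) := by
    rw [hAi0, hAi'0, ← Complex.ofReal_mul]
    congr 1
    have hG : s * (Real.Gamma (1/3) * Real.Gamma (2/3)) = 2 * Real.pi := by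
      rw [show (2:ℝ)/3 = 1 - 1/3 by norm_num, Real.Gamma_mul_Gamma_one_sub,
        show Real.pi * (1/3) = Real.pi/3 by ring, Real.sin_pi_div_three, ← hsdef]
      field_simp
    have hAB : (3:ℝ)^((2:ℝ)/3) * 3^((1:ℝ)/3) = 3 := by
      rw [← Real.rpow_add (by norm_num : (0:ℝ) < 3)]
      norm_num
    have hΓ1 : 0 < Real.Gamma (1/3) := Real.Gamma_pos_of_pos (by norm_num)
    have hΓ2 : 0 < Real.Gamma (2/3) := Real.Gamma_pos_of_pos (by norm_num)
    have h1 : (0:ℝ) < (3:ℝ)^((2:ℝ)/3) := Real.rpow_pos_of_pos (by norm_num) _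
    have h2 : (0:ℝ) < (3:ℝ)^((1:ℝ)/3) := Real.rpow_pos_of_pos (by norm_num) _
    field_simp
    nlinarith [hAB, hG, mul_pos hΓ1 hΓ2, mul_pos h1 h2]
  have habB : a * B = (1 - ω) * ((-(s/(6*Real.pi)) : ℝ) : ℂ) := by
    linear_combination (-1 : ℂ) * W1 + (1 - ω) * hK
  have hkne : ((-(s/(6*Real.pi)) : ℝ) : ℂ) ≠ 0 := by
    have h0 : s / (6*Real.pi) ≠ 0 := by positivity
    simpa using h0
  have h1ωne : (1:ℂ) - ω ≠ 0 := sub_ne_zero.mpr (Ne.symm hωne1)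
  have habne : a * B ≠ 0 := by rw [habB]; exact mul_ne_zero h1ωne hkne
  have hane : a ≠ 0 := fun h => habne (by rw [h, zero_mul])
  have hBne : B ≠ 0 := fun h => habne (by rw [h, mul_zero])
  -- the connection function f3
  set f3 : ℂ → ℂ := fun z => Ai z + ω * Ai (ω * z) + ω^2 * Ai (ω^2 * z) with hf3def
  set f3' : ℂ → ℂ := fun z =>
    deriv Ai z + ω * (ω * deriv Ai (ω * z)) + ω^2 * (ω^2 * deriv Ai (ω^2 * z)) with hf3'def
  have hf3 : ∀ z, HasDerivAt f3 (f3' z) z := fun z =>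
    ((hAi z).add ((hcomp ω z).const_mul ω)).add ((hcomp (ω^2) z).const_mul (ω^2))
  have hf3' : ∀ z, HasDerivAt f3' (z * f3 z) z := by
    intro z
    have h := ((hAi' z).add ((hcomp' ω z).const_mul ω)).add ((hcomp' (ω^2) z).const_mul (ω^2))
    refine h.congr_deriv (Eq.symm ?_)
    simp only [hf3def]
    linear_combination (-(ω * z * Ai (ω * z) + ω^2 * (1 + ω^3) * z * Ai (ω^2 * z))) * hω3
  have hf30 : f3 0 = 0 := by
    simp only [hf3def, mul_zero]
    linear_combination Ai 0 * hsum
  have hf3'0 : f3' 0 = 0 := by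
    simp only [hf3'def, mul_zero]
    linear_combination deriv Ai 0 * hsum + (deriv Ai 0 * ω) * hω3
  have W2 := airy_wronskian_const Ai f3 (deriv Ai) f3' (fun z => z * Ai z) (fun z => z * f3 z)
      hAi hAi' hf3 hf3' (fun z => rfl) (fun z => rfl) (ζ:ℂ) 0
  rw [hf30, hf3'0, hζ] at W2
  have hf3ζ : f3 (ζ:ℂ) = 0 := by
    have h : a * f3 (ζ:ℂ) = 0 := by linear_combination (-1:ℂ) * W2
    exact (mul_eq_zero.mp h).resolve_left hane
  have W3 := airy_wronskian_const (fun z => Ai (ω * z)) f3 (fun z => ω * deriv Ai (ω * z)) f3'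
      (fun z => z * Ai (ω * z)) (fun z => z * f3 z)
      (fun z => hcomp ω z) hAm'' hf3 hf3' (fun z => rfl) (fun z => rfl) (ζ:ℂ) 0
  rw [hf30, hf3'0] at W3
  simp only [mul_zero] at W3
  have hf3'ζ : f3' (ζ:ℂ) = 0 := by
    have h : B * f3' (ζ:ℂ) = 0 := by
      rw [hBdef]
      linear_combination W3 + (ω * deriv Ai (ω * (ζ:ℂ))) * hf3ζ
    exact (mul_eq_zero.mp h).resolve_left hBne
  -- ω² and conj facts
  have hω2e : ω^2 = (-1 - (s:ℂ)*I)/2 := by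
    rw [hωe]
    linear_combination (-1/4 : ℂ) * hsC + ((s:ℂ)^2/4) * hI2
  have hω4e : ω^4 = (-1 + (s:ℂ)*I)/2 := by
    rw [show ω^4 = ω^3 * ω by ring, hω3, one_mul, hωe]
  have hωconj : (starRingEnd ℂ) ω = ω^2 := by
    rw [hω2e, hωe]
    simp [map_div₀, Complex.conj_I, Complex.conj_ofReal, map_ofNat]
    ring
  have hAi'conj : deriv Ai (ω^2 * (ζ:ℂ)) = starRingEnd ℂ c := by
    have h : (ω^2 * (ζ:ℂ)) = starRingEnd ℂ (ω * (ζ:ℂ)) := by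
      rw [map_mul, hωconj, Complex.conj_ofReal]
    rw [h, hcdef]
    exact airy_deriv_conj_conj Ai hD hconj _
  have eq3 : a + ω^2 * c + ω^4 * (starRingEnd ℂ c) = 0 := by
    have h := hf3'ζ
    simp only [hf3'def] at h
    rw [hAi'conj] at h
    linear_combination h
  -- a is real
  have hareal : a = ((a.re : ℝ) : ℂ) := by
    have h := airy_deriv_conj_conj Ai hD hconj (ζ:ℂ)
    rw [Complex.conj_ofReal] at h
    exact (Complex.conj_eq_iff_re.mp h.symm).symm
  set α : ℝ := a.re with hαdef
  have hαne : α ≠ 0 := fun h => hane (by rw [hareal, h]; simp)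
  have hαabs : (0:ℝ) < |α| := abs_pos.mpr hαne
  -- rewrite the derivative in the goal
  have hBgoal : deriv (fun w => Ai (ω * w)) (ζ:ℂ) = ω * c := (hcomp ω (ζ:ℂ)).deriv
  rw [hBgoal]
  -- absolute values
  have habsa : ‖a‖ = |α| := by rw [hareal]; exact Complex.norm_real α
  have habs1ω : ‖1 - ω‖ = s := by
    have h1 : (1:ℂ) - ω = (3 - (s:ℂ)*I)/2 := by rw [hωe]; ring
    have h2 : ‖3 - (s:ℂ)*I‖ = 2*s := by
      rw [Complex.norm_def, Complex.normSq_apply]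
      simp only [Complex.sub_re, Complex.sub_im, Complex.mul_re, Complex.mul_im,
        Complex.I_re, Complex.I_im, Complex.ofReal_re, Complex.ofReal_im]
      rw [show ((3:ℂ).re - ((s:ℝ)*0 - 0*1)) * ((3:ℂ).re - ((s:ℝ)*0 - 0*1))
          + ((3:ℂ).im - ((s:ℝ)*1 + 0*0)) * ((3:ℂ).im - ((s:ℝ)*1 + 0*0)) = (2*s)^2 from by
        simp; nlinarith [hs2], Real.sqrt_sq (by positivity)]
    rw [h1, norm_div, h2]
    simp
  have habsk : ‖(((-(s/(6*Real.pi)) : ℝ) : ℂ))‖ = s/(6*Real.pi) := by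
    rw [Complex.norm_real, Real.norm_eq_abs, abs_neg, abs_of_pos (by positivity)]
  have habsB : ‖B‖ = 1/(2*Real.pi*|α|) := by
    have h := congrArg (‖·‖) habB
    rw [norm_mul, norm_mul, habsa, habs1ω, habsk] at h
    have h2 : |α| * ‖B‖ = 1/(2*Real.pi) := by
      rw [h]
      field_simp
      linear_combination 2*hs2
    field_simp at h2 ⊢
    linarith [h2]
  -- the logarithmic derivative as an explicit complex number
  have hαCne : ((α:ℝ):ℂ) ≠ 0 := by simpa using hαne
  have hsCne : ((s:ℝ):ℂ) ≠ 0 := by simpa using ne_of_gt hspos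
  have hπCne : ((Real.pi:ℝ):ℂ) ≠ 0 := by simpa using ne_of_gt hπpos
  have hBeq : B = (1 - ω) * ((-(s/(6*Real.pi)) : ℝ) : ℂ) / a := by
    rw [eq_div_iff hane]
    linear_combination habB
  have hdiv : (ω * c)/B = ((Real.pi:ℂ)*(α:ℂ)*(s:ℂ)/3) * (c * (3 - (s:ℂ)*I)) := by
    rw [div_eq_iff hBne, hBeq, hareal, hωe]
    push_cast
    have hP : (Real.pi:ℂ) * (α:ℂ) * ((Real.pi:ℂ))⁻¹ * ((α:ℂ))⁻¹ = 1 := by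
      field_simp
    linear_combination ((s:ℂ)^2/36 * c * (3 - (s:ℂ)*I)^2) * hP
      + (c*(1/4 - (s:ℂ)*I/6 - ((s:ℂ)^2+3)/36)) * hsC + (c*(s:ℂ)^4/36)*hI2
  have him : ((ω * c)/B).im = (Real.pi*α*s/3) * (c.re * (-s) + c.im * 3) := by
    rw [hdiv]
    simp [Complex.mul_im, Complex.mul_re, Complex.ofReal_re, Complex.ofReal_im,
      Complex.sub_re, Complex.sub_im, Complex.I_re, Complex.I_im, Complex.div_im,
      Complex.div_re]
  -- the real constraint from the connection identity
  have hre : s * c.im = c.re - α := by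
    have h : 2*((α:ℝ):ℂ) + (-1 - (s:ℂ)*I)*c + (-1 + (s:ℂ)*I)*(starRingEnd ℂ c) = 0 := by
      linear_combination 2*eq3 + (-2*c)*hω2e + (-2*(starRingEnd ℂ c))*hω4e + (-2:ℂ)*hareal
    have hr := congrArg Complex.re h
    simp only [Complex.add_re, Complex.mul_re, Complex.sub_re, Complex.sub_im,
      Complex.ofReal_re, Complex.ofReal_im, Complex.I_re, Complex.I_im,
      Complex.conj_re, Complex.conj_im, Complex.zero_re, Complex.neg_re, Complex.neg_im,
      Complex.one_re, Complex.one_im, Complex.mul_im, Complex.add_im, Complex.add_re,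
      Complex.re_ofNat, Complex.im_ofNat] at hr
    linarith
  -- finish
  rw [him, habsB, habsa]
  have hrhs : (-1 : ℝ)/(8*Real.pi^2 * (1/(2*Real.pi*|α|))^3 * |α|) = -(Real.pi * α^2) := by
    have h3 : |α|^3 = α^2*|α| := by
      rw [pow_succ, _root_.sq_abs]
    rw [div_pow, one_pow]
    field_simp
    linear_combination (-8:ℝ)*(sq_abs α)
  rw [hrhs]
  linear_combination (Real.pi*α)*hre - (Real.pi*α*c.re/3)*hs2
end

section
/- Newton–Kantorovich type lemma: Let z₀ ∈ ℂ, ε > 0, and let f be analytic on the closed disc Ω = {z : |z − z₀| ≤ ε}. Suppose |f(z₀)| ≤ a, |f'(z₀)| ≥ b, and sup_{z ∈ Ω} |f''(z)| ≤ d. If a + d·ε² < ε·b and ε·b < 1, then f has a unique zero in Ω. -/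
open Complex Metric

/-- Newton–Kantorovich type lemma: if `f` is analytic on the closed disc
`Ω = {z : |z − z₀| ≤ ε}`, `|f(z₀)| ≤ a`, `|f'(z₀)| ≥ b`, `sup_Ω |f''| ≤ d`, and
`a + d·ε² < ε·b < 1`, then `f` has a unique zero in `Ω`. -/
theorem newton_unique_zero
    (f : ℂ → ℂ) (z₀ : ℂ) (ε a b d : ℝ) (hε : 0 < ε)
    (hf : AnalyticOnNhd ℂ f (closedBall z₀ ε))
    (ha : ‖f z₀‖ ≤ a)
    (hb : b ≤ ‖deriv f z₀‖)
    (hd : ∀ z ∈ closedBall z₀ ε, ‖deriv (deriv f) z‖ ≤ d)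
    (h1 : a + d * ε ^ 2 < ε * b) (h2 : ε * b < 1) :
    ∃! z, z ∈ closedBall z₀ ε ∧ f z = 0 := by
  set S : Set ℂ := closedBall z₀ ε with hS
  have hz₀S : z₀ ∈ S := mem_closedBall_self hε.le
  have ha0 : 0 ≤ a := le_trans (norm_nonneg _) ha
  have hd0 : 0 ≤ d := le_trans (norm_nonneg _) (hd z₀ hz₀S)
  have hb0 : 0 < b := by nlinarith [sq_nonneg ε]
  set c : ℂ := deriv f z₀ with hc
  have hcb : b ≤ ‖c‖ := hb
  have hcpos : 0 < ‖c‖ := lt_of_lt_of_le hb0 hcb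
  have hcne : c ≠ 0 := by
    intro h; rw [h] at hcpos; simp at hcpos
  have hconv : Convex ℝ S := convex_closedBall _ _
  -- the derivative of f is Lipschitz-close to c on S
  have hf' : AnalyticOnNhd ℂ (deriv f) S := hf.deriv
  have hderiv_close : ∀ z ∈ S, ‖deriv f z - c‖ ≤ d * ε := by
    intro z hz
    have := hconv.norm_image_sub_le_of_norm_deriv_le
      (f := deriv f) (C := d)
      (fun x hx => (hf' x hx).differentiableAt) hd hz₀S hz
    calc ‖deriv f z - c‖ ≤ d * ‖z - z₀‖ := this
      _ ≤ d * ε := by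
          apply mul_le_mul_of_nonneg_left _ hd0
          simpa [dist_eq_norm] using mem_closedBall.1 hz
  -- key Lipschitz estimate for g z = c z - f z
  have key : ∀ z ∈ S, ∀ w ∈ S,
      ‖(c * z - f z) - (c * w - f w)‖ ≤ d * ε * ‖z - w‖ := by
    intro z hz w hw
    have := hconv.norm_image_sub_le_of_norm_hasDerivWithin_le
      (f := fun x => c * x - f x) (f' := fun x => c - deriv f x) (C := d * ε)
      (fun x hx => (((hasDerivAt_id x).const_mul c).sub
        (hf x hx).differentiableAt.hasDerivAt).hasDerivWithinAt.congr_deriv (by ring))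
      (fun x hx => by
        have := hderiv_close x hx
        calc ‖c - deriv f x‖ = ‖deriv f x - c‖ := by
              rw [norm_sub_rev]
          _ ≤ d * ε := this)
      hw hz
    simpa using this
  -- Newton map
  set N : ℂ → ℂ := fun z => z - f z / c with hN
  have hNfix : ∀ z, f z = 0 → N z = z := by
    intro z hz; simp [hN, hz]
  have hfixN : ∀ z, N z = z → f z = 0 := by
    intro z hz
    have : f z / c = 0 := by
      have := hz; simp only [hN] at this
      linear_combination z - this
    exact (div_eq_zero_iff.1 this).resolve_right hcne
  -- N maps S into S
  have hmaps : Set.MapsTo N S S := by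
    intro z hz
    have hdist : ‖z - z₀‖ ≤ ε := by
      simpa [dist_eq_norm] using mem_closedBall.1 hz
    have hkey := key z hz z₀ hz₀S
    have heq : N z - z₀ = (((c * z - f z) - (c * z₀ - f z₀)) - f z₀) / c := by
      rw [hN]; field_simp; ring
    have hnum : ‖((c * z - f z) - (c * z₀ - f z₀)) - f z₀‖ ≤ d * ε * ε + a := by
      have h1' : ‖((c * z - f z) - (c * z₀ - f z₀)) - f z₀‖
          ≤ ‖(c * z - f z) - (c * z₀ - f z₀)‖ + ‖f z₀‖ := by
        simpa [sub_eq_add_neg] using norm_add_le _ (-(f z₀))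
      have h2' : d * ε * ‖z - z₀‖ ≤ d * ε * ε :=
        mul_le_mul_of_nonneg_left hdist (by positivity)
      linarith
    have : ‖N z - z₀‖ ≤ (d * ε * ε + a) / b := by
      rw [heq, norm_div]
      exact div_le_div₀ (by positivity) hnum hb0 hcb
    have hlt : (d * ε * ε + a) / b ≤ ε := by
      rw [div_le_iff₀ hb0]; nlinarith
    exact mem_closedBall.2 (by simpa [dist_eq_norm] using this.trans hlt)
  -- N is a contraction on S with constant d ε / b
  have hK1 : d * ε / b < 1 := by
    rw [div_lt_one hb0]; nlinarith
  have hcontr : ∀ z ∈ S, ∀ w ∈ S,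
      ‖N z - N w‖ ≤ (d * ε / b) * ‖z - w‖ := by
    intro z hz w hw
    have heq : N z - N w = ((c * z - f z) - (c * w - f w)) / c := by
      rw [hN]; field_simp
    rw [heq, norm_div]
    rw [div_le_iff₀ hcpos] at *
    calc ‖(c * z - f z) - (c * w - f w)‖
        ≤ d * ε * ‖z - w‖ := key z hz w hw
      _ ≤ d * ε / b * ‖z - w‖ * ‖c‖ := by
          rw [div_mul_eq_mul_div, div_mul_eq_mul_div, le_div_iff₀ hb0]
          have : ‖z - w‖ * b ≤ ‖z - w‖ * ‖c‖ :=
            mul_le_mul_of_nonneg_left hcb (norm_nonneg _)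
          nlinarith [norm_nonneg (z - w), mul_nonneg hd0 hε.le]
  -- uniqueness
  have huniq : ∀ z ∈ S, f z = 0 → ∀ w ∈ S, f w = 0 → z = w := by
    intro z hz hfz w hw hfw
    have h := hcontr z hz w hw
    rw [hNfix z hfz, hNfix w hfw] at h
    by_contra hne
    have : 0 < ‖z - w‖ := by
      simpa [sub_eq_zero] using (norm_pos_iff).2 (sub_ne_zero.2 hne)
    nlinarith
  -- existence via Banach fixed point
  set K : NNReal := ⟨d * ε / b, by positivity⟩ with hKdef
  have hKlt : K < 1 := by
    rw [← NNReal.coe_lt_coe]; exact hK1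
  have hlip : LipschitzOnWith K N S := by
    rw [lipschitzOnWith_iff_dist_le_mul]
    intro x hx y hy
    rw [dist_eq_norm, dist_eq_norm]; exact hcontr x hx y hy
  have hcw : ContractingWith K (hmaps.restrict N S S) :=
    ⟨hKlt, hlip.mapsToRestrict hmaps⟩
  obtain ⟨y, hyS, hyfix, -, -⟩ := hcw.exists_fixedPoint'
    (isClosed_closedBall : IsClosed S).isComplete hmaps hz₀S (edist_ne_top _ _)
  have hfy : f y = 0 := hfixN y hyfix
  exact ⟨y, ⟨hyS, hfy⟩, fun w hw => huniq w hw.1 hw.2 y hyS hfy⟩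
end
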